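/- With f(r) = (1 - 2mr²/K³)^{1/2}, m, K > 0, 2m < K, the Tolman III pressure p(r) = (3m/(4πK³))(f(r) - f(K))/(3f(K) - f(r)) is strictly positive for 0 ≤ r < K. -/

import Mathlib

/-- The Tolman III pressure is strictly positive for 0 ≤ r < K
(under the assumption 2m/K < 8/9 ensuring positivity of the denominator). -/
theorem tolmanIII_pressure_positive (m K : ℝ) (hm : 0 < m) (hK : 0 < K)
    (h2m : 2 * m < K) (h89 : 2 * m / K < 8 / 9) :
    ∀ r : ℝ, 0 ≤ r → r < K →
      0 < (3 * m / (4 * Real.pi * K ^ 3)) *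
        (Real.sqrt (1 - 2 * m * r ^ 2 / K ^ 3) - Real.sqrt (1 - 2 * m * K ^ 2 / K ^ 3)) /
        (3 * Real.sqrt (1 - 2 * m * K ^ 2 / K ^ 3) - Real.sqrt (1 - 2 * m * r ^ 2 / K ^ 3)) := by
  intro r hr hrK
  have hK3 : (0:ℝ) < K ^ 3 := by positivity
  have hba : (1 - 2 * m * K ^ 2 / K ^ 3 : ℝ) < 1 - 2 * m * r ^ 2 / K ^ 3 := by
    have h1 : 2 * m * r ^ 2 < 2 * m * K ^ 2 := by nlinarith [mul_pos hm (mul_pos (sub_pos.mpr hrK) (show (0:ℝ) < K + r by linarith))]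
    have := (div_lt_div_iff_of_pos_right hK3).mpr h1
    linarith
  have hb19 : (1:ℝ)/9 < 1 - 2 * m * K ^ 2 / K ^ 3 := by
    have heq : 2 * m * K ^ 2 / K ^ 3 = 2 * m / K := by
      field_simp
    rw [heq]; linarith
  have ha1 : (1 - 2 * m * r ^ 2 / K ^ 3 : ℝ) ≤ 1 := by
    have : 0 ≤ 2 * m * r ^ 2 / K ^ 3 := by positivity
    linarith
  have hsab : Real.sqrt (1 - 2 * m * K ^ 2 / K ^ 3) <
      Real.sqrt (1 - 2 * m * r ^ 2 / K ^ 3) :=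
    Real.sqrt_lt_sqrt (by linarith) hba
  have hsb : (1:ℝ)/3 < Real.sqrt (1 - 2 * m * K ^ 2 / K ^ 3) := by
    have h := Real.sqrt_lt_sqrt (by norm_num : (0:ℝ) ≤ 1/9) hb19
    have h19 : Real.sqrt (1/9) = 1/3 := by
      rw [show (1:ℝ)/9 = (1/3)^2 by norm_num, Real.sqrt_sq (by norm_num)]
    linarith [h19 ▸ h]
  have hsa1 : Real.sqrt (1 - 2 * m * r ^ 2 / K ^ 3) ≤ 1 := by
    calc Real.sqrt (1 - 2 * m * r ^ 2 / K ^ 3) ≤ Real.sqrt 1 := Real.sqrt_le_sqrt ha1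
    _ = 1 := Real.sqrt_one
  have hden : 0 < 3 * Real.sqrt (1 - 2 * m * K ^ 2 / K ^ 3) -
      Real.sqrt (1 - 2 * m * r ^ 2 / K ^ 3) := by linarith
  have hnum : 0 < Real.sqrt (1 - 2 * m * r ^ 2 / K ^ 3) -
      Real.sqrt (1 - 2 * m * K ^ 2 / K ^ 3) := by linarith
  have hpre : 0 < 3 * m / (4 * Real.pi * K ^ 3) := by
    have := Real.pi_pos; positivity
  positivity
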